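/- As Q → ∞, the number of Farey fractions of order Q with odd denominator equals (2/π²)·Q² + O(Q log Q), and the number of Farey fractions of order Q with even denominator equals (1/π²)·Q² + O(Q log Q). -/

import Mathlib

open Filter MeasureTheory Real Asymptotics Topology

open ArithmeticFunction Finset
open scoped ArithmeticFunction.Moebius

noncomputable section

/-- The Farey fractions of order `Q`: all rationals in `[0,1]` with denominator `≤ Q`. -/
def fareyFinset (Q : ℕ) : Finset ℚ :=
  ((Finset.range (Q + 1) ×ˢ Finset.Icc 1 Q).image fun p => (p.1 : ℚ) / (p.2 : ℚ)).filter
    fun x => x ≤ 1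

lemma num_le_den_of_le_one {x : ℚ} (h : x ≤ 1) : x.num ≤ (x.den : ℤ) := by
  have hd : (0:ℚ) < (x.den : ℚ) := by exact_mod_cast x.pos
  have := mul_le_mul_of_nonneg_right h hd.le
  rw [Rat.mul_den_eq_num, one_mul] at this
  exact_mod_cast this

lemma mem_fareyFinset {Q : ℕ} (hQ : 1 ≤ Q) (x : ℚ) :
    x ∈ fareyFinset Q ↔ 0 ≤ x ∧ x ≤ 1 ∧ x.den ≤ Q := by
  constructor
  · intro hx
    rw [fareyFinset, Finset.mem_filter, Finset.mem_image] at hx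
    obtain ⟨⟨p, hp, rfl⟩, hle⟩ := hx
    rw [Finset.mem_product, Finset.mem_range, Finset.mem_Icc] at hp
    refine ⟨by positivity, hle, ?_⟩
    have hq1 : 1 ≤ p.2 := hp.2.1
    have : ((p.1:ℚ)/(p.2:ℚ)) = Rat.divInt (p.1:ℤ) (p.2:ℤ) := by
      rw [Rat.divInt_eq_div]; push_cast; ring
    rw [this]
    have hdvd := Rat.den_dvd (p.1:ℤ) (p.2:ℤ)
    have : (Rat.divInt (p.1:ℤ) (p.2:ℤ)).den ∣ p.2 := by exact_mod_cast hdvd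
    exact le_trans (Nat.le_of_dvd (by omega) this) hp.2.2
  · rintro ⟨h0, h1, hden⟩
    rw [fareyFinset, Finset.mem_filter, Finset.mem_image]
    refine ⟨⟨(x.num.toNat, x.den), ?_, ?_⟩, h1⟩
    · rw [Finset.mem_product, Finset.mem_range, Finset.mem_Icc]
      have h2 := num_le_den_of_le_one h1
      have h3 := x.pos
      constructor
      · omega
      · exact ⟨x.pos, hden⟩
    · have h0' : (0:ℤ) ≤ x.num := Rat.num_nonneg.mpr h0
      have : ((x.num.toNat : ℚ)) = ((x.num : ℚ)) := by exact_mod_cast Int.toNat_of_nonneg h0'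
      simp only [this]
      exact x.num_div_den

lemma den_natCast_div {a d : ℕ} (h : Nat.Coprime a d) (hd : 0 < d) : ((a:ℚ)/(d:ℚ)).den = d := by
  have h2 : ((a:ℚ)/(d:ℚ)) = ((a:ℤ):ℚ)/((d:ℤ):ℚ) := by push_cast; ring
  have := Rat.den_div_eq_of_coprime (a := (a:ℤ)) (b := (d:ℤ)) (by exact_mod_cast hd) (by simpa using h)
  rw [h2]; exact_mod_cast this

lemma num_natCast_div {a d : ℕ} (h : Nat.Coprime a d) (hd : 0 < d) : ((a:ℚ)/(d:ℚ)).num = a := by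
  have h2 : ((a:ℚ)/(d:ℚ)) = ((a:ℤ):ℚ)/((d:ℤ):ℚ) := by push_cast; ring
  have := Rat.num_div_eq_of_coprime (a := (a:ℤ)) (b := (d:ℤ)) (by exact_mod_cast hd) (by simpa using h)
  rw [h2]; exact_mod_cast this

lemma farey_fiber_card {Q d : ℕ} (hQ : 1 ≤ Q) (hd1 : 1 ≤ d) (hdQ : d ≤ Q) :
    ((fareyFinset Q).filter fun x => x.den = d).card
      = d.totient + if d = 1 then 1 else 0 := by
  have hcard : ((fareyFinset Q).filter fun x => x.den = d).card
      = ((Finset.range (d+1)).filter fun a => Nat.Coprime a d).card := by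
    refine Finset.card_nbij' (fun x => x.num.toNat) (fun a => (a:ℚ)/(d:ℚ)) ?_ ?_ ?_ ?_ <;> simp only [Set.MapsTo, Set.LeftInvOn, Set.RightInvOn, Finset.mem_coe]
    · intro x hx
      rw [Finset.mem_filter, mem_fareyFinset hQ] at hx
      obtain ⟨⟨h0, h1, _⟩, hxd⟩ := hx
      rw [Finset.mem_filter, Finset.mem_range]
      have h2 := num_le_den_of_le_one h1
      have h0' : (0:ℤ) ≤ x.num := Rat.num_nonneg.mpr h0
      have hred := x.reduced
      constructor
      · omega
      · have : x.num.toNat = x.num.natAbs := by omega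
        rw [this, ← hxd]; exact hred
    · intro a ha
      rw [Finset.mem_filter, Finset.mem_range] at ha
      obtain ⟨har, hcop⟩ := ha
      rw [Finset.mem_filter, mem_fareyFinset hQ]
      have hd0 : (0:ℚ) < (d:ℚ) := by exact_mod_cast hd1
      refine ⟨⟨by positivity, ?_, ?_⟩, ?_⟩
      · rw [div_le_one hd0]; exact_mod_cast Nat.lt_succ_iff.mp har
      · rw [den_natCast_div hcop hd1]; exact hdQ
      · exact den_natCast_div hcop hd1
    · intro x hx
      rw [Finset.mem_filter, mem_fareyFinset hQ] at hx
      obtain ⟨⟨h0, h1, _⟩, hxd⟩ := hx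
      have h0' : (0:ℤ) ≤ x.num := Rat.num_nonneg.mpr h0
      have : ((x.num.toNat : ℚ)) = ((x.num : ℚ)) := by exact_mod_cast Int.toNat_of_nonneg h0'
      rw [← hxd, this]
      exact x.num_div_den
    · intro a ha
      rw [Finset.mem_filter, Finset.mem_range] at ha
      rw [num_natCast_div ha.2 hd1]
      simp
  rw [hcard]
  have hins : Finset.range (d+1) = insert d (Finset.range d) := by
    rw [Finset.range_add_one]
  rw [hins, Finset.filter_insert]
  by_cases hd : d = 1
  · subst hd
    simp [Nat.totient_one]
  · have : ¬ Nat.Coprime d d := by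
      simp [Nat.Coprime, Nat.gcd_self, hd]
    rw [if_neg this, if_neg hd, add_zero, Nat.totient]
    congr 1
    apply Finset.filter_congr
    intro a _
    simp [Nat.coprime_comm]

lemma farey_card (p : ℕ → Prop) [DecidablePred p] {Q : ℕ} (hQ : 1 ≤ Q) :
    ((fareyFinset Q).filter fun x => p x.den).card
      = (if p 1 then 1 else 0) + ∑ d ∈ Finset.Icc 1 Q, (if p d then d.totient else 0) := by
  rw [Finset.card_eq_sum_card_fiberwise (f := Rat.den) (t := Finset.Icc 1 Q)]
  · have : ∀ d ∈ Finset.Icc 1 Q,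
        (((fareyFinset Q).filter fun x => p x.den).filter fun x => x.den = d).card
        = if p d then (d.totient + if d = 1 then 1 else 0) else 0 := by
      intro d hd
      rw [Finset.mem_Icc] at hd
      by_cases hpd : p d
      · rw [if_pos hpd, ← farey_fiber_card hQ hd.1 hd.2]
        congr 1
        rw [Finset.filter_filter]
        apply Finset.filter_congr
        intro x _
        constructor
        · exact fun h => h.2
        · exact fun h => ⟨h ▸ hpd, h⟩
      · rw [if_neg hpd]
        rw [Finset.card_eq_zero, Finset.filter_filter, Finset.filter_eq_empty_iff]
        rintro x hx ⟨hp1, rfl⟩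
        exact hpd hp1
    rw [Finset.sum_congr rfl this]
    have split : ∀ d, (if p d then (d.totient + if d = 1 then 1 else 0) else 0)
        = (if p d ∧ d = 1 then 1 else 0) + (if p d then d.totient else 0) := by
      intro d
      by_cases hd1 : d = 1
      · subst hd1; by_cases hp : p 1 <;> simp [hp, Nat.totient_one]
      · by_cases hp : p d <;> simp [hp, hd1]
    rw [Finset.sum_congr rfl (fun d _ => split d), Finset.sum_add_distrib]
    congr 1
    rw [Finset.sum_eq_single_of_mem 1 (Finset.mem_Icc.mpr ⟨le_refl 1, hQ⟩)]
    · simp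
    · intro d _ hd1
      simp [hd1]
  · intro x hx
    rw [Finset.mem_coe, Finset.mem_filter, mem_fareyFinset hQ] at hx
    rw [Finset.mem_coe, Finset.mem_Icc]
    exact ⟨x.pos, hx.1.2.2⟩

lemma summable_one_div_sq : Summable (fun n : ℕ => (1:ℝ)/(n:ℝ)^2) := by
  exact_mod_cast Real.summable_one_div_nat_pow.mpr one_lt_two

lemma summable_mu : Summable (fun n : ℕ => (μ n : ℝ)/(n:ℝ)^2) := by
  apply Summable.of_norm_bounded summable_one_div_sq
  intro n
  rw [Real.norm_eq_abs, abs_div, abs_of_nonneg (by positivity : (0:ℝ) ≤ (n:ℝ)^2)]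
  gcongr
  · exact_mod_cast abs_moebius_le_one (n := n)

lemma tsum_mu : HasSum (fun n : ℕ => (μ n : ℝ)/(n:ℝ)^2) (6/π^2) := by
  have hs : (1:ℝ) < (2:ℂ).re := by norm_num
  have hz : riemannZeta 2 * LSeries (fun n => ((μ n : ℤ) : ℂ)) 2 = 1 := by
    rw [← LSeries_one_eq_riemannZeta hs]; exact LSeries_one_mul_Lseries_moebius hs
  have hzval : riemannZeta 2 = (π:ℂ)^2/6 := riemannZeta_two
  have hπ : (π:ℂ)^2 ≠ 0 := by
    simp [Complex.ofReal_ne_zero, Real.pi_ne_zero]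
  have hL : LSeries (fun n => ((μ n : ℤ) : ℂ)) 2 = ((6/π^2 : ℝ) : ℂ) := by
    rw [hzval] at hz
    field_simp at hz ⊢
    push_cast
    field_simp
    linear_combination hz
  have hcast : ((∑' n : ℕ, (μ n : ℝ)/(n:ℝ)^2 : ℝ) : ℂ)
      = LSeries (fun n => ((μ n : ℤ) : ℂ)) 2 := by
    rw [Complex.ofReal_tsum]
    apply tsum_congr
    intro n
    rcases eq_or_ne n 0 with rfl | hn
    · simp [LSeries.term_zero]
    · rw [LSeries.term_of_ne_zero hn]
      push_cast
      rw [show (2:ℂ) = ((2:ℕ):ℂ) by norm_num, Complex.cpow_natCast]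
  have : (∑' n : ℕ, (μ n : ℝ)/(n:ℝ)^2) = 6/π^2 := by
    have := hcast.trans hL
    exact_mod_cast this
  exact this ▸ summable_mu.hasSum

lemma mu_two_mul (m : ℕ) : (μ (2*m) : ℝ) = if Odd m then -(μ m : ℝ) else 0 := by
  rcases Nat.even_or_odd m with he | ho
  · rw [if_neg (Nat.not_odd_iff_even.mpr he)]
    rcases eq_or_ne m 0 with rfl | hm
    · simp
    obtain ⟨k, rfl⟩ := he
    have : ¬ Squarefree (2*(k+k)) := by
      intro h
      have h4 : (2:ℕ)*2 ∣ 2*(k+k) := ⟨k, by ring⟩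
      exact absurd (Nat.isUnit_iff.mp (h 2 h4)) (by norm_num)
    simp [moebius_eq_zero_of_not_squarefree this]
  · rw [if_pos ho]
    have hcop : Nat.Coprime 2 m := Nat.coprime_two_left.mpr ho
    rw [isMultiplicative_moebius.map_mul_of_coprime hcop,
      moebius_apply_prime Nat.prime_two]
    push_cast
    ring

lemma summable_mu_odd : Summable (fun n : ℕ => (if Odd n then (μ n : ℝ) else 0)/(n:ℝ)^2) := by
  apply Summable.of_norm_bounded summable_one_div_sq
  intro n
  rw [Real.norm_eq_abs, abs_div, abs_of_nonneg (by positivity : (0:ℝ) ≤ (n:ℝ)^2)]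
  gcongr
  rcases eq_or_ne n 0 with rfl | hn
  · simp
  split
  · exact_mod_cast abs_moebius_le_one (n := n)
  · simp

lemma tsum_mu_odd : HasSum (fun n : ℕ => (if Odd n then (μ n : ℝ) else 0)/(n:ℝ)^2) (8/π^2) := by
  set fo : ℕ → ℝ := fun n => (if Odd n then (μ n : ℝ) else 0)/(n:ℝ)^2 with hfo
  set fe : ℕ → ℝ := fun n => (if Even n then (μ n : ℝ) else 0)/(n:ℝ)^2 with hfe
  set So : ℝ := ∑' n, fo n with hSo
  have hsumo : HasSum fo So := summable_mu_odd.hasSum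
  -- fe composed with doubling
  have hcomp : ∀ m : ℕ, fe (2*m) = fo m * (-(1/4)) := by
    intro m
    simp only [hfe, hfo]
    rw [if_pos (even_two_mul m), mu_two_mul]
    rcases Nat.even_or_odd m with he | ho
    · rw [if_neg (Nat.not_odd_iff_even.mpr he),
        if_neg (Nat.not_odd_iff_even.mpr he)]
      simp
    · rw [if_pos ho, if_pos ho]
      have hm : (m:ℝ) ≠ 0 := by
        have := ho.pos
        positivity
      have h4 : ((2*m:ℕ):ℝ)^2 = 4*(m:ℝ)^2 := by push_cast; ring
      rw [h4, div_mul_eq_mul_div, div_eq_div_iff (by positivity) (by positivity)]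
      ring
  have hinj : Function.Injective (fun m : ℕ => 2*m) := fun a b h => by simpa using h
  have hvanish : ∀ n : ℕ, n ∉ Set.range (fun m : ℕ => 2*m) → fe n = 0 := by
    intro n hn
    have : ¬ Even n := by
      intro ⟨k, hk⟩; exact hn ⟨k, by rw [hk]; ring⟩
    simp [hfe, this]
  have hsume : HasSum fe (So * (-(1/4))) := by
    rw [← Function.Injective.hasSum_iff hinj hvanish]
    have := hsumo.mul_right (-(1/4))
    have hf : (fe ∘ fun m => 2*m) = fun i => fo i * -(1/4) := funext hcomp
    rw [hf]
    exact this
  have hadd : HasSum (fun n => fo n + fe n) (So + So * (-(1/4))) := hsumo.add hsume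
  have heq : (fun n : ℕ => fo n + fe n) = fun n : ℕ => (μ n : ℝ)/(n:ℝ)^2 := by
    ext n
    simp only [hfo, hfe]
    rcases Nat.even_or_odd n with he | ho
    · rw [if_neg (Nat.not_odd_iff_even.mpr he), if_pos he]
      simp
    · rw [if_pos ho, if_neg (Nat.not_even_iff_odd.mpr ho)]
      simp
  rw [heq] at hadd
  have hSoval : So + So * (-(1/4)) = 6/π^2 := hadd.unique tsum_mu
  have hπ : (π:ℝ)^2 ≠ 0 := by positivity
  have : So = 8/π^2 := by
    field_simp at hSoval ⊢
    linarith
  exact this ▸ hsumo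

lemma telescope_hasSum {Q : ℕ} (hQ : 1 ≤ Q) :
    HasSum (fun i : ℕ => 1/((Q:ℝ)+i) - 1/((Q:ℝ)+i+1)) (1/(Q:ℝ)) := by
  have hpos : ∀ i : ℕ, (0:ℝ) < (Q:ℝ)+i := fun i => by
    have : (1:ℝ) ≤ (Q:ℝ) := by exact_mod_cast hQ
    linarith [Nat.cast_nonneg (α := ℝ) i]
  rw [hasSum_iff_tendsto_nat_of_nonneg]
  · have hps : ∀ n : ℕ, ∑ i ∈ Finset.range n, (1/((Q:ℝ)+i) - 1/((Q:ℝ)+i+1))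
        = 1/(Q:ℝ) - 1/((Q:ℝ)+n) := by
      intro n
      calc ∑ i ∈ Finset.range n, (1/((Q:ℝ)+i) - 1/((Q:ℝ)+i+1))
          = ∑ i ∈ Finset.range n,
            ((fun i : ℕ => 1/((Q:ℝ)+i)) i - (fun i : ℕ => 1/((Q:ℝ)+i)) (i+1)) := by
            apply Finset.sum_congr rfl
            intro i _
            push_cast
            ring
        _ = 1/((Q:ℝ)+((0:ℕ):ℝ)) - 1/((Q:ℝ)+n) := Finset.sum_range_sub' _ n
        _ = 1/(Q:ℝ) - 1/((Q:ℝ)+n) := by norm_num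
    simp only [hps]
    have h0 : Tendsto (fun n : ℕ => 1/((Q:ℝ)+n)) atTop (nhds 0) := by
      have h1 := (tendsto_add_atTop_iff_nat Q).2
        (tendsto_const_div_atTop_nhds_zero_nat (1:ℝ))
      apply h1.congr
      intro n
      push_cast
      ring
    have := (tendsto_const_nhds (x := 1/(Q:ℝ)) (f := atTop (α := ℕ))).sub h0
    simpa using this
  · intro i
    have h1 := hpos i
    have h2 : (0:ℝ) < (Q:ℝ)+i+1 := by linarith
    rw [sub_nonneg]
    apply one_div_le_one_div_of_le h1
    linarith

lemma tail_sq_bound {Q : ℕ} (hQ : 1 ≤ Q) :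
    ∑' i : ℕ, 1/((i:ℝ)+Q+1)^2 ≤ 1/(Q:ℝ) := by
  have hQR : (1:ℝ) ≤ (Q:ℝ) := by exact_mod_cast hQ
  have hpos : ∀ i : ℕ, (0:ℝ) < (Q:ℝ)+i := fun i => by linarith [Nat.cast_nonneg (α := ℝ) i]
  have hle : ∀ i : ℕ, 1/((i:ℝ)+Q+1)^2 ≤ 1/((Q:ℝ)+i) - 1/((Q:ℝ)+i+1) := by
    intro i
    have h1 := hpos i
    have h2 : (0:ℝ) < (Q:ℝ)+i+1 := by linarith
    have key : 1/((Q:ℝ)+i) - 1/((Q:ℝ)+i+1) = 1/(((Q:ℝ)+i)*((Q:ℝ)+i+1)) := by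
      field_simp
      ring
    rw [key]
    apply one_div_le_one_div_of_le (by positivity)
    nlinarith
  have hsum := telescope_hasSum hQ
  calc ∑' i : ℕ, 1/((i:ℝ)+Q+1)^2
      ≤ ∑' i : ℕ, (1/((Q:ℝ)+i) - 1/((Q:ℝ)+i+1)) := by
        apply Summable.tsum_le_tsum hle ?_ hsum.summable
        · -- summability of lhs
          have : Summable (fun i : ℕ => 1/((i+(Q+1):ℕ):ℝ)^2) := by
            exact_mod_cast (summable_nat_add_iff (Q+1)).mpr
              (Real.summable_one_div_nat_pow.mpr one_lt_two)
          apply this.congr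
          intro i
          push_cast
          ring_nf
    _ = 1/(Q:ℝ) := hsum.tsum_eq

lemma range_succ_eq_insert_Icc (Q : ℕ) : Finset.range (Q+1) = insert 0 (Finset.Icc 1 Q) := by
  ext n
  simp only [Finset.mem_range, Finset.mem_insert, Finset.mem_Icc]
  omega

lemma partial_tsum_bound (a : ℕ → ℝ) (ha : ∀ e, |a e| ≤ 1) (h0 : a 0 = 0) (A : ℝ)
    (hA : HasSum (fun e : ℕ => a e/(e:ℝ)^2) A) {Q : ℕ} (hQ : 1 ≤ Q) :
    |∑ e ∈ Finset.Icc 1 Q, a e/(e:ℝ)^2 - A| ≤ 1/(Q:ℝ) := by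
  set f : ℕ → ℝ := fun e => a e/(e:ℝ)^2 with hf
  have hrange : ∑ e ∈ Finset.Icc 1 Q, f e = ∑ e ∈ Finset.range (Q+1), f e := by
    rw [range_succ_eq_insert_Icc, Finset.sum_insert (by simp)]
    simp [hf, h0]
  have hsplit := Summable.sum_add_tsum_nat_add (f := f) (Q+1) hA.summable
  rw [hA.tsum_eq] at hsplit
  have htail : ∑ e ∈ Finset.Icc 1 Q, f e - A = -(∑' i : ℕ, f (i+(Q+1))) := by
    rw [hrange]; linarith
  rw [htail, abs_neg]
  have hsummR : Summable (fun i : ℕ => 1/((i:ℝ)+Q+1)^2) := by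
    have : Summable (fun i : ℕ => 1/((i+(Q+1):ℕ):ℝ)^2) := by
      exact_mod_cast (summable_nat_add_iff (Q+1)).mpr
        (Real.summable_one_div_nat_pow.mpr one_lt_two)
    apply this.congr
    intro i; push_cast; ring_nf
  have habs : ∀ i : ℕ, |f (i+(Q+1))| ≤ 1/((i:ℝ)+Q+1)^2 := by
    intro i
    show |a (i+(Q+1)) / ((i+(Q+1):ℕ):ℝ)^2| ≤ _
    rw [abs_div, abs_of_nonneg (by positivity : (0:ℝ) ≤ ((i+(Q+1):ℕ):ℝ)^2)]
    have hc : ((i+(Q+1):ℕ):ℝ) = (i:ℝ)+Q+1 := by push_cast; ring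
    rw [hc]
    gcongr
    exact ha _
  have hsummabs : Summable (fun i : ℕ => |f (i+(Q+1))|) :=
    Summable.of_nonneg_of_le (fun i => abs_nonneg _) habs hsummR
  have step1 : |∑' i : ℕ, f (i+(Q+1))| ≤ ∑' i : ℕ, |f (i+(Q+1))| := by
    have := norm_tsum_le_tsum_norm (f := fun i : ℕ => f (i+(Q+1)))
      (by simpa only [Real.norm_eq_abs] using hsummabs)
    simpa only [Real.norm_eq_abs] using this
  have step2 : ∑' i : ℕ, |f (i+(Q+1))| ≤ ∑' i : ℕ, 1/((i:ℝ)+Q+1)^2 :=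
    Summable.tsum_le_tsum habs hsummabs hsummR
  exact step1.trans (step2.trans (tail_sq_bound hQ))

lemma range_succ_eq_insert_Icc' (Q : ℕ) : Finset.range (Q+1) = insert 0 (Finset.Icc 1 Q) := by
  ext n
  simp only [Finset.mem_range, Finset.mem_insert, Finset.mem_Icc]
  omega

lemma harmonic_Icc (Q : ℕ) : ∑ e ∈ Finset.Icc 1 Q, (1:ℝ)/e ≤ 1 + Real.log Q := by
  have h1 : (harmonic Q : ℝ) = ∑ i ∈ Finset.Icc 1 Q, (1:ℝ)/i := by
    rw [harmonic]; push_cast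
    rw [show Finset.Icc 1 Q = Finset.Ico 1 (Q+1) by rfl, Finset.sum_Ico_eq_sum_range]
    simp [add_comm, one_div]
  rw [← h1]
  exact harmonic_le_one_add_log Q

lemma sum_Icc_id_real (K : ℕ) : ∑ m ∈ Finset.Icc 1 K, (m:ℝ) = K*(K+1)/2 := by
  have h : (∑ m ∈ Finset.Icc 1 K, m) * 2 = K*(K+1) := by
    have h2 : ∑ m ∈ Finset.Icc 1 K, m = ∑ m ∈ Finset.range (K+1), m := by
      rw [range_succ_eq_insert_Icc', Finset.sum_insert (by simp), zero_add]
    rw [h2, Finset.sum_range_id_mul_two]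
    simp [Nat.succ_sub_one]
    ring
  have h3 : ((∑ m ∈ Finset.Icc 1 K, m : ℕ) : ℝ) * 2 = (K:ℝ)*((K:ℝ)+1) := by
    exact_mod_cast h
  rw [Nat.cast_sum] at h3
  linarith

lemma G_all_bound (K : ℕ) : |(∑ m ∈ Finset.Icc 1 K, (m:ℝ)) - 1/2 * (K:ℝ)^2| ≤ (K:ℝ) := by
  rw [sum_Icc_id_real]
  rw [abs_le]
  constructor <;> nlinarith [Nat.cast_nonneg (α := ℝ) K]

lemma G_odd_nat (K : ℕ) : ∑ m ∈ Finset.Icc 1 K, (if Odd m then m else 0) = ((K+1)/2)^2 := by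
  induction K with
  | zero => simp
  | succ K ih =>
    rw [Finset.sum_Icc_succ_top (by omega : 1 ≤ K+1), ih]
    rcases Nat.even_or_odd (K+1) with he | ho
    · rw [if_neg (Nat.not_odd_iff_even.mpr he), add_zero]
      obtain ⟨t, ht⟩ := he
      have h1 : (K+1)/2 = t := by omega
      have h2 : (K+1+1)/2 = t := by omega
      rw [h1, h2]
    · rw [if_pos ho]
      obtain ⟨t, ht⟩ := ho
      have h1 : (K+1)/2 = t := by omega
      have h2 : (K+1+1)/2 = t+1 := by omega
      rw [h1, h2, ht]
      ring
lemma G_odd_bound (K : ℕ) :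
    |(∑ m ∈ Finset.Icc 1 K, (if Odd m then (m:ℝ) else 0)) - 1/4 * (K:ℝ)^2| ≤ (K:ℝ) := by
  have hcast : ∑ m ∈ Finset.Icc 1 K, (if Odd m then (m:ℝ) else 0)
      = (((K+1)/2 : ℕ) : ℝ)^2 := by
    have h1 : ∑ m ∈ Finset.Icc 1 K, (if Odd m then (m:ℝ) else 0)
        = ((∑ m ∈ Finset.Icc 1 K, (if Odd m then m else 0) : ℕ) : ℝ) := by
      rw [Nat.cast_sum]
      apply Finset.sum_congr rfl
      intro m _
      split <;> simp
    rw [h1, G_odd_nat]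
    push_cast
    ring
  rw [hcast]
  set t : ℕ := (K+1)/2 with htdef
  have h1 : K ≤ 2*t := by omega
  have h2 : 2*t ≤ K+1 := by omega
  rcases Nat.eq_zero_or_pos K with rfl | hK
  · have ht0 : t = 0 := by omega
    rw [ht0]
    norm_num
  · have hKR : (1:ℝ) ≤ (K:ℝ) := by exact_mod_cast hK
    have h1R : (K:ℝ) ≤ 2*(t:ℝ) := by exact_mod_cast h1
    have h2R : 2*(t:ℝ) ≤ (K:ℝ)+1 := by exact_mod_cast h2
    rw [abs_le]
    constructor <;> nlinarith

lemma key_estimate (a : ℕ → ℝ) (ha : ∀ e, |a e| ≤ 1) (h0 : a 0 = 0)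
    (G : ℕ → ℝ) (β : ℝ) (hβ0 : 0 ≤ β) (hβ1 : β ≤ 1)
    (hG : ∀ K : ℕ, |G K - β * (K:ℝ)^2| ≤ (K:ℝ))
    (A : ℝ) (hA : HasSum (fun e : ℕ => a e/(e:ℝ)^2) A) {Q : ℕ} (hQ : 1 ≤ Q) :
    |(∑ e ∈ Finset.Icc 1 Q, a e * G (Q/e)) - β * A * (Q:ℝ)^2|
      ≤ 4 * (Q:ℝ) * (1 + Real.log Q) := by
  have hQR : (1:ℝ) ≤ (Q:ℝ) := by exact_mod_cast hQ
  have hlog : (0:ℝ) ≤ Real.log Q := Real.log_nonneg hQR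
  set P : ℝ := ∑ e ∈ Finset.Icc 1 Q, a e/(e:ℝ)^2 with hP
  have hepos : ∀ e ∈ Finset.Icc 1 Q, (0:ℝ) < (e:ℝ) := by
    intro e he
    rw [Finset.mem_Icc] at he
    exact_mod_cast he.1
  -- floor facts
  have hdiv1 : ∀ e ∈ Finset.Icc 1 Q, ((Q/e : ℕ):ℝ) ≤ (Q:ℝ)/(e:ℝ) :=
    fun e _ => Nat.cast_div_le
  have hdiv2 : ∀ e ∈ Finset.Icc 1 Q, (Q:ℝ)/(e:ℝ) ≤ ((Q/e : ℕ):ℝ) + 1 := by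
    intro e he
    rw [Finset.mem_Icc] at he
    have he0 : 0 < e := he.1
    have hnat : Q < (Q/e + 1) * e := (Nat.div_lt_iff_lt_mul he0).mp (Nat.lt_succ_self _)
    have hR : (Q:ℝ) < (((Q/e:ℕ):ℝ) + 1) * (e:ℝ) := by exact_mod_cast hnat
    rw [div_le_iff₀ (by exact_mod_cast he0)]
    linarith
  have hdivnn : ∀ e ∈ Finset.Icc 1 Q, (0:ℝ) ≤ ((Q/e : ℕ):ℝ) := fun e _ => Nat.cast_nonneg _
  -- harmonic-type bound
  have hharm : ∑ e ∈ Finset.Icc 1 Q, (Q:ℝ)/(e:ℝ) ≤ (Q:ℝ) * (1 + Real.log Q) := by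
    have : ∑ e ∈ Finset.Icc 1 Q, (Q:ℝ)/(e:ℝ) = (Q:ℝ) * ∑ e ∈ Finset.Icc 1 Q, (1:ℝ)/(e:ℝ) := by
      rw [Finset.mul_sum]
      apply Finset.sum_congr rfl
      intro e _
      ring
    rw [this]
    apply mul_le_mul_of_nonneg_left (harmonic_Icc Q) (by linarith)
  -- splitting
  have hsplit : (∑ e ∈ Finset.Icc 1 Q, a e * G (Q/e)) - β * A * (Q:ℝ)^2
      = (∑ e ∈ Finset.Icc 1 Q, a e * (G (Q/e) - β * ((Q/e : ℕ):ℝ)^2))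
        + (∑ e ∈ Finset.Icc 1 Q, a e * β * (((Q/e : ℕ):ℝ)^2 - ((Q:ℝ)/(e:ℝ))^2))
        + β * (Q:ℝ)^2 * (P - A) := by
    have hterm : ∀ e ∈ Finset.Icc 1 Q, a e * G (Q/e)
        = a e * (G (Q/e) - β * ((Q/e : ℕ):ℝ)^2)
          + a e * β * (((Q/e : ℕ):ℝ)^2 - ((Q:ℝ)/(e:ℝ))^2)
          + β * (Q:ℝ)^2 * (a e/(e:ℝ)^2) := by
      intro e he
      have he0 : (e:ℝ) ≠ 0 := ne_of_gt (hepos e he)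
      field_simp
      ring
    rw [Finset.sum_congr rfl hterm, Finset.sum_add_distrib, Finset.sum_add_distrib,
      ← Finset.mul_sum, ← hP]
    ring
  have h1 : |∑ e ∈ Finset.Icc 1 Q, a e * (G (Q/e) - β * ((Q/e : ℕ):ℝ)^2)|
      ≤ (Q:ℝ) * (1 + Real.log Q) := by
    refine (Finset.abs_sum_le_sum_abs _ _).trans ((Finset.sum_le_sum ?_).trans hharm)
    intro e he
    rw [abs_mul]
    calc |a e| * |G (Q/e) - β * ((Q/e : ℕ):ℝ)^2|
        ≤ 1 * ((Q/e : ℕ):ℝ) := by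
          apply mul_le_mul (ha e) (hG (Q/e)) (abs_nonneg _) zero_le_one
      _ = ((Q/e : ℕ):ℝ) := one_mul _
      _ ≤ (Q:ℝ)/(e:ℝ) := hdiv1 e he
  have h2 : |∑ e ∈ Finset.Icc 1 Q, a e * β * (((Q/e : ℕ):ℝ)^2 - ((Q:ℝ)/(e:ℝ))^2)|
      ≤ 2 * ((Q:ℝ) * (1 + Real.log Q)) := by
    refine (Finset.abs_sum_le_sum_abs _ _).trans ?_
    have hb : ∀ e ∈ Finset.Icc 1 Q, |a e * β * (((Q/e : ℕ):ℝ)^2 - ((Q:ℝ)/(e:ℝ))^2)|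
        ≤ 2 * ((Q:ℝ)/(e:ℝ)) := by
      intro e he
      have hX := hdiv1 e he
      have hY := hdiv2 e he
      have hXnn := hdivnn e he
      have hYnn : (0:ℝ) ≤ (Q:ℝ)/(e:ℝ) := by linarith
      rw [abs_mul, abs_mul, abs_of_nonneg hβ0]
      have habs2 : |(((Q/e : ℕ):ℝ)^2 - ((Q:ℝ)/(e:ℝ))^2)| ≤ 2 * ((Q:ℝ)/(e:ℝ)) := by
        rw [abs_sub_comm, abs_of_nonneg (by nlinarith)]
        nlinarith
      calc |a e| * β * |(((Q/e : ℕ):ℝ)^2 - ((Q:ℝ)/(e:ℝ))^2)|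
          ≤ 1 * 1 * (2 * ((Q:ℝ)/(e:ℝ))) := by
            apply mul_le_mul (mul_le_mul (ha e) hβ1 hβ0 zero_le_one) habs2 (abs_nonneg _)
              (by norm_num)
        _ = 2 * ((Q:ℝ)/(e:ℝ)) := by ring
    refine (Finset.sum_le_sum hb).trans ?_
    rw [← Finset.mul_sum]
    linarith [hharm]
  have h3 : |β * (Q:ℝ)^2 * (P - A)| ≤ (Q:ℝ) * (1 + Real.log Q) := by
    rw [abs_mul, abs_mul, abs_of_nonneg hβ0, abs_of_nonneg (by positivity : (0:ℝ) ≤ (Q:ℝ)^2)]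
    have hPA : |P - A| ≤ 1/(Q:ℝ) := partial_tsum_bound a ha h0 A hA hQ
    calc β * (Q:ℝ)^2 * |P - A| ≤ 1 * (Q:ℝ)^2 * (1/(Q:ℝ)) := by
          apply mul_le_mul (mul_le_mul hβ1 (le_refl _) (by positivity) zero_le_one) hPA
            (abs_nonneg _) (by positivity)
      _ = (Q:ℝ) := by field_simp
      _ ≤ (Q:ℝ) * (1 + Real.log Q) := by nlinarith
  calc |(∑ e ∈ Finset.Icc 1 Q, a e * G (Q/e)) - β * A * (Q:ℝ)^2|
      ≤ |∑ e ∈ Finset.Icc 1 Q, a e * (G (Q/e) - β * ((Q/e : ℕ):ℝ)^2)|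
        + |∑ e ∈ Finset.Icc 1 Q, a e * β * (((Q/e : ℕ):ℝ)^2 - ((Q:ℝ)/(e:ℝ))^2)|
        + |β * (Q:ℝ)^2 * (P - A)| := by
        rw [hsplit]
        exact (abs_add_le _ _).trans (by gcongr; exact abs_add_le _ _)
    _ ≤ 4 * (Q:ℝ) * (1 + Real.log Q) := by linarith

lemma totient_moebius (n : ℕ) (hn : 0 < n) :
    ((n.totient : ℝ)) = ∑ x ∈ n.divisorsAntidiagonal, (μ x.1 : ℝ) * (x.2 : ℝ) := by
  have h := (sum_eq_iff_sum_mul_moebius_eq (R := ℝ)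
    (f := fun n => (n.totient : ℝ)) (g := fun n => (n : ℝ))).mp ?_ n hn
  · exact h.symm
  · intro m hm
    rw [← Nat.cast_sum]
    exact_mod_cast congrArg (Nat.cast : ℕ → ℝ) (Nat.sum_totient m)

lemma swap_sum (Q : ℕ) (F : ℕ × ℕ → ℝ) :
    ∑ n ∈ Finset.Icc 1 Q, ∑ x ∈ n.divisorsAntidiagonal, F x
      = ∑ e ∈ Finset.Icc 1 Q, ∑ m ∈ Finset.Icc 1 (Q/e), F (e, m) := by
  rw [Finset.sum_sigma', Finset.sum_sigma']
  refine Finset.sum_nbij' (fun p => ⟨p.2.1, p.2.2⟩) (fun p => ⟨p.1 * p.2, (p.1, p.2)⟩)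
    ?_ ?_ ?_ ?_ ?_
  · rintro ⟨n, e, m⟩ hp
    rw [Finset.mem_sigma] at hp
    obtain ⟨hn, hx⟩ := hp
    rw [Nat.mem_divisorsAntidiagonal] at hx
    rw [Finset.mem_Icc] at hn
    dsimp only at hx ⊢
    obtain ⟨hxn, hn0⟩ := hx
    have hx1 : 0 < e := Nat.pos_of_ne_zero (by rintro rfl; rw [zero_mul] at hxn; omega)
    have hx2 : 0 < m := Nat.pos_of_ne_zero (by rintro rfl; rw [mul_zero] at hxn; omega)
    rw [Finset.mem_sigma]
    constructor
    · rw [Finset.mem_Icc]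
      constructor
      · exact hx1
      · calc e ≤ e * m := Nat.le_mul_of_pos_right _ hx2
          _ = n := hxn
          _ ≤ Q := hn.2
    · rw [Finset.mem_Icc]
      refine ⟨hx2, ?_⟩
      rw [Nat.le_div_iff_mul_le hx1]
      calc m * e = n := by rw [mul_comm]; exact hxn
        _ ≤ Q := hn.2
  · rintro ⟨e, m⟩ hp
    rw [Finset.mem_sigma] at hp ⊢
    obtain ⟨he, hm⟩ := hp
    rw [Finset.mem_Icc] at he hm
    have he1 : 0 < e := he.1
    have hm1 : 0 < m := hm.1
    have hem : e * m ≤ Q := by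
      have := hm.2
      rw [Nat.le_div_iff_mul_le he1] at this
      calc e * m = m * e := mul_comm _ _
        _ ≤ Q := this
    constructor
    · rw [Finset.mem_Icc]
      exact ⟨Nat.mul_pos he1 hm1, hem⟩
    · rw [Nat.mem_divisorsAntidiagonal]
      exact ⟨rfl, (Nat.mul_pos he1 hm1).ne'⟩
  · rintro ⟨n, e, m⟩ hp
    rw [Finset.mem_sigma] at hp
    obtain ⟨-, hx⟩ := hp
    rw [Nat.mem_divisorsAntidiagonal] at hx
    dsimp only at hx ⊢
    obtain ⟨rfl, -⟩ := hx
    rfl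
  · rintro ⟨e, m⟩ _
    rfl
  · rintro ⟨n, e, m⟩ _
    rfl

lemma sAll_eq (Q : ℕ) :
    ∑ n ∈ Finset.Icc 1 Q, (n.totient : ℝ)
      = ∑ e ∈ Finset.Icc 1 Q, (μ e : ℝ) * (∑ m ∈ Finset.Icc 1 (Q/e), (m:ℝ)) := by
  have h1 : ∀ n ∈ Finset.Icc 1 Q, (n.totient:ℝ)
      = ∑ x ∈ n.divisorsAntidiagonal, (μ x.1:ℝ)*(x.2:ℝ) := by
    intro n hn
    rw [Finset.mem_Icc] at hn
    exact totient_moebius n hn.1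
  rw [Finset.sum_congr rfl h1, swap_sum]
  apply Finset.sum_congr rfl
  intro e _
  rw [Finset.mul_sum]

lemma sOdd_eq (Q : ℕ) :
    ∑ n ∈ Finset.Icc 1 Q, (if Odd n then (n.totient : ℝ) else 0)
      = ∑ e ∈ Finset.Icc 1 Q, (if Odd e then (μ e : ℝ) else 0)
          * (∑ m ∈ Finset.Icc 1 (Q/e), (if Odd m then (m:ℝ) else 0)) := by
  have h1 : ∀ n ∈ Finset.Icc 1 Q, (if Odd n then (n.totient:ℝ) else 0)
      = ∑ x ∈ n.divisorsAntidiagonal,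
          (if Odd (x.1*x.2) then (μ x.1:ℝ)*(x.2:ℝ) else 0) := by
    intro n hn
    rw [Finset.mem_Icc] at hn
    by_cases h : Odd n
    · rw [if_pos h, totient_moebius n hn.1]
      apply Finset.sum_congr rfl
      intro x hx
      rw [Nat.mem_divisorsAntidiagonal] at hx
      rw [hx.1, if_pos h]
    · rw [if_neg h]
      symm
      apply Finset.sum_eq_zero
      intro x hx
      rw [Nat.mem_divisorsAntidiagonal] at hx
      rw [hx.1, if_neg h]
  rw [Finset.sum_congr rfl h1, swap_sum]
  apply Finset.sum_congr rfl
  intro e _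
  by_cases he : Odd e
  · rw [if_pos he, Finset.mul_sum]
    apply Finset.sum_congr rfl
    intro m _
    by_cases hm : Odd m
    · rw [if_pos (Nat.odd_mul.mpr ⟨he, hm⟩), if_pos hm]
    · rw [if_neg (fun hc => hm (Nat.odd_mul.mp hc).2), if_neg hm, mul_zero]
  · rw [if_neg he, zero_mul]
    apply Finset.sum_eq_zero
    intro m _
    rw [if_neg (fun hc => he (Nat.odd_mul.mp hc).1)]

lemma sAll_bound {Q : ℕ} (hQ : 1 ≤ Q) :
    |(∑ n ∈ Finset.Icc 1 Q, (n.totient : ℝ)) - 3/π^2 * (Q:ℝ)^2|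
      ≤ 4 * (Q:ℝ) * (1 + Real.log Q) := by
  rw [sAll_eq]
  have h := key_estimate (fun e => (μ e : ℝ)) (fun e => by show |((μ e : ℤ):ℝ)| ≤ 1; exact_mod_cast abs_moebius_le_one)
    (by simp) (fun K => ∑ m ∈ Finset.Icc 1 K, (m:ℝ)) (1/2) (by norm_num) (by norm_num)
    G_all_bound (6/π^2) tsum_mu hQ
  have hc : (1:ℝ)/2 * (6/π^2) = 3/π^2 := by ring
  rw [hc] at h
  exact h

lemma sOdd_bound {Q : ℕ} (hQ : 1 ≤ Q) :
    |(∑ n ∈ Finset.Icc 1 Q, (if Odd n then (n.totient : ℝ) else 0)) - 2/π^2 * (Q:ℝ)^2|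
      ≤ 4 * (Q:ℝ) * (1 + Real.log Q) := by
  rw [sOdd_eq]
  have h := key_estimate (fun e => if Odd e then (μ e : ℝ) else 0)
    (fun e => by
      show |if Odd e then ((μ e : ℤ):ℝ) else 0| ≤ 1
      split
      · exact_mod_cast abs_moebius_le_one
      · simp)
    (by simp) (fun K => ∑ m ∈ Finset.Icc 1 K, (if Odd m then (m:ℝ) else 0)) (1/4)
    (by norm_num) (by norm_num) G_odd_bound (8/π^2) tsum_mu_odd hQ
  have hc : (1:ℝ)/4 * (8/π^2) = 2/π^2 := by ring
  rw [hc] at h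
  exact h

/-- As `Q → ∞`, the number of Farey fractions of order `Q` with odd
denominator equals `(2/π²)Q² + O(Q log Q)`, and the number with even denominator equals
`(1/π²)Q² + O(Q log Q)`. -/
theorem card_farey_odd_even_asymptotic :
    ((fun Q : ℕ => ((((fareyFinset Q).filter fun x => Odd x.den).card : ℝ) -
        2 / π ^ 2 * (Q : ℝ) ^ 2))
      =O[atTop] fun Q : ℕ => (Q : ℝ) * Real.log Q) ∧
    ((fun Q : ℕ => ((((fareyFinset Q).filter fun x => Even x.den).card : ℝ) -
        1 / π ^ 2 * (Q : ℝ) ^ 2))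
      =O[atTop] fun Q : ℕ => (Q : ℝ) * Real.log Q) := by
  have hnum : ∀ Q : ℕ, 2 ≤ Q → (1:ℝ)/2 ≤ Real.log Q ∧ (2:ℝ) ≤ (Q:ℝ) := by
    intro Q hQ2
    have hc : (2:ℝ) ≤ (Q:ℝ) := by exact_mod_cast hQ2
    have hl : Real.log 2 ≤ Real.log Q := Real.log_le_log (by norm_num) hc
    exact ⟨le_trans (by linarith [Real.log_two_gt_d9]) hl, hc⟩
  constructor
  · rw [isBigO_iff]
    refine ⟨13, ?_⟩
    filter_upwards [eventually_ge_atTop 2] with Q hQ2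
    have hQ1 : 1 ≤ Q := by omega
    obtain ⟨hhalf, hQR⟩ := hnum Q hQ2
    have hlog : (0:ℝ) ≤ Real.log Q := by linarith
    have hcardR : (((fareyFinset Q).filter fun x => Odd x.den).card : ℝ)
        = 1 + ∑ n ∈ Finset.Icc 1 Q, (if Odd n then (n.totient : ℝ) else 0) := by
      rw [farey_card (fun d => Odd d) hQ1]
      push_cast [apply_ite (Nat.cast : ℕ → ℝ)]
      norm_num
    have hb := sOdd_bound hQ1
    set S : ℝ := ∑ n ∈ Finset.Icc 1 Q, (if Odd n then (n.totient : ℝ) else 0)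
    rw [Real.norm_eq_abs, Real.norm_eq_abs, hcardR]
    have h1 : 1 + S - 2/π^2 * (Q:ℝ)^2 = 1 + (S - 2/π^2 * (Q:ℝ)^2) := by ring
    rw [h1, abs_of_nonneg (by positivity : (0:ℝ) ≤ (Q:ℝ) * Real.log Q)]
    calc |1 + (S - 2/π^2 * (Q:ℝ)^2)| ≤ 1 + |S - 2/π^2 * (Q:ℝ)^2| := by
          calc |1 + (S - 2/π^2 * (Q:ℝ)^2)| ≤ |(1:ℝ)| + |S - 2/π^2 * (Q:ℝ)^2| := abs_add_le _ _
            _ = 1 + |S - 2/π^2 * (Q:ℝ)^2| := by norm_num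
      _ ≤ 1 + 4 * (Q:ℝ) * (1 + Real.log Q) := by linarith
      _ ≤ 13 * ((Q:ℝ) * Real.log Q) := by nlinarith
  · rw [isBigO_iff]
    refine ⟨25, ?_⟩
    filter_upwards [eventually_ge_atTop 2] with Q hQ2
    have hQ1 : 1 ≤ Q := by omega
    obtain ⟨hhalf, hQR⟩ := hnum Q hQ2
    have hlog : (0:ℝ) ≤ Real.log Q := by linarith
    have hcardR : (((fareyFinset Q).filter fun x => Even x.den).card : ℝ)
        = (∑ n ∈ Finset.Icc 1 Q, (n.totient : ℝ))
          - ∑ n ∈ Finset.Icc 1 Q, (if Odd n then (n.totient : ℝ) else 0) := by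
      rw [farey_card (fun d => Even d) hQ1]
      push_cast [apply_ite (Nat.cast : ℕ → ℝ)]
      rw [if_neg (by norm_num : ¬ Even 1)]
      rw [← Finset.sum_sub_distrib]
      rw [zero_add]
      apply Finset.sum_congr rfl
      intro n _
      rcases Nat.even_or_odd n with he | ho
      · rw [if_pos he, if_neg (Nat.not_odd_iff_even.mpr he), sub_zero]
      · rw [if_neg (Nat.not_even_iff_odd.mpr ho), if_pos ho]
        ring
    have hbA := sAll_bound hQ1
    have hbO := sOdd_bound hQ1
    set SA : ℝ := ∑ n ∈ Finset.Icc 1 Q, (n.totient : ℝ)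
    set SO : ℝ := ∑ n ∈ Finset.Icc 1 Q, (if Odd n then (n.totient : ℝ) else 0)
    rw [Real.norm_eq_abs, Real.norm_eq_abs, hcardR]
    have h1 : SA - SO - 1/π^2 * (Q:ℝ)^2
        = (SA - 3/π^2 * (Q:ℝ)^2) - (SO - 2/π^2 * (Q:ℝ)^2) := by ring
    rw [h1, abs_of_nonneg (by positivity : (0:ℝ) ≤ (Q:ℝ) * Real.log Q)]
    calc |(SA - 3/π^2 * (Q:ℝ)^2) - (SO - 2/π^2 * (Q:ℝ)^2)|
        ≤ |SA - 3/π^2 * (Q:ℝ)^2| + |SO - 2/π^2 * (Q:ℝ)^2| := abs_sub _ _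
      _ ≤ 8 * (Q:ℝ) * (1 + Real.log Q) := by linarith
      _ ≤ 25 * ((Q:ℝ) * Real.log Q) := by nlinarith
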